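/- Even moments of the Lebesgue measure on the unit ℓ^p ball: for p > 1 and every multi-index k = (k₁,…,kₙ) with all kᵢ even, ∫_{B^n_p} x^k dx = (2/p)^n · Γ(1 + (n + |k|)/p)⁻¹ · ∏_{i=1}^n Γ((1 + kᵢ)/p), where |k| = k₁ + ⋯ + kₙ and x^k = x₁^{k₁} ⋯ xₙ^{kₙ}. -/

import Mathlib

open MeasureTheory Set

open Real

lemma aux_int1d_integrable {p : ℝ} (hp : 1 ≤ p) (k : ℕ) :
    Integrable (fun t : ℝ => |t| ^ k * Real.exp (-|t| ^ p)) := by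
  have h0 : IntegrableOn (fun t : ℝ => |t| ^ k * Real.exp (-|t| ^ p)) (Ioi 0) := by
    refine ((integrableOn_rpow_mul_exp_neg_rpow (s := (k : ℝ))
      (by linarith [Nat.cast_nonneg (α := ℝ) k]) (lt_of_lt_of_le zero_lt_one hp)).congr_fun (fun x hx => ?_) measurableSet_Ioi)
    rw [abs_of_pos hx]; simp only [rpow_natCast]
  have h1 : IntegrableOn (fun t : ℝ => |t| ^ k * Real.exp (-|t| ^ p)) (Iic 0) := by
    rw [← Measure.map_neg_eq_self (volume : Measure ℝ)]
    have m : MeasurableEmbedding fun x : ℝ => -x := (Homeomorph.neg ℝ).measurableEmbedding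
    rw [m.integrableOn_map_iff]
    simp_rw [Function.comp_def, abs_neg, neg_preimage, neg_Iic, neg_zero]
    exact Iff.mpr integrableOn_Ici_iff_integrableOn_Ioi h0
  have := h1.union h0
  rwa [Iic_union_Ioi, integrableOn_univ] at this

lemma aux_int1d {p : ℝ} (hp : 1 ≤ p) (k : ℕ) :
    ∫ t : ℝ, |t| ^ k * Real.exp (-|t| ^ p) = 2 / p * Real.Gamma ((1 + (k : ℝ)) / p) := by
  have hp0 : (0 : ℝ) < p := lt_of_lt_of_le zero_lt_one hp
  rw [integral_comp_abs (f := fun u : ℝ => u ^ k * Real.exp (-u ^ p))]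
  have : ∫ x in Ioi (0:ℝ), x ^ k * Real.exp (-x ^ p)
      = ∫ x in Ioi (0:ℝ), x ^ (k : ℝ) * Real.exp (-x ^ p) := by
    refine setIntegral_congr_fun measurableSet_Ioi (fun x hx => ?_)
    rw [rpow_natCast]
  rw [this, integral_rpow_mul_exp_neg_rpow hp0 (by linarith [Nat.cast_nonneg (α := ℝ) k])]
  rw [add_comm (k:ℝ) 1]
  ring

lemma aux_log_integral {a : ℝ} (ha : 0 < a) :
    ∫⁻ t in Ioo (0:ℝ) 1, ENNReal.ofReal ((-Real.log t) ^ a) =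
      ENNReal.ofReal (Real.Gamma (1 + a)) := by
  have himg : (fun s : ℝ => Real.exp (-s)) '' (Ioi 0) = Ioo 0 1 := by
    ext y
    constructor
    · rintro ⟨s, hs, rfl⟩
      exact ⟨Real.exp_pos _, Real.exp_lt_one_iff.mpr (by simpa using hs)⟩
    · rintro ⟨hy0, hy1⟩
      exact ⟨-Real.log y, by simpa using Real.log_neg hy0 hy1,
        by simp [Real.exp_log hy0]⟩
  have hderiv : ∀ s ∈ Ioi (0:ℝ),
      HasDerivWithinAt (fun s => Real.exp (-s)) (-Real.exp (-s)) (Ioi 0) s := by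
    intro s _
    have h := (Real.hasDerivAt_exp (-s)).comp s (hasDerivAt_neg s)
    simpa [mul_comm, Function.comp_def] using h.hasDerivWithinAt
  have hinj : InjOn (fun s : ℝ => Real.exp (-s)) (Ioi 0) := by
    intro x _ y _ h
    have := Real.exp_injective h
    linarith [neg_injective this]
  have hint : IntegrableOn (fun s : ℝ => |(-Real.exp (-s))| • (-Real.log (Real.exp (-s))) ^ a)
      (Ioi 0) := by
    have h := Real.GammaIntegral_convergent (s := a + 1) (by linarith)
    refine h.congr_fun (fun s hs => ?_) measurableSet_Ioi
    simp [Real.log_exp, abs_of_pos (Real.exp_pos _)]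
  have hgint : IntegrableOn (fun t : ℝ => (-Real.log t) ^ a) (Ioo (0:ℝ) 1) := by
    rw [← himg,
      integrableOn_image_iff_integrableOn_abs_deriv_smul measurableSet_Ioi hderiv hinj]
    exact hint
  have hval : ∫ t in Ioo (0:ℝ) 1, (-Real.log t) ^ a = Real.Gamma (1 + a) := by
    rw [← himg, integral_image_eq_integral_abs_deriv_smul measurableSet_Ioi hderiv hinj,
      Real.Gamma_eq_integral (by linarith : (0:ℝ) < 1 + a)]
    refine setIntegral_congr_fun measurableSet_Ioi fun s hs => ?_
    simp [Real.log_exp, abs_of_pos (Real.exp_pos _)]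
  rw [← ofReal_integral_eq_lintegral_ofReal hgint ?_, hval]
  refine (ae_restrict_iff' measurableSet_Ioo).mpr (ae_of_all _ fun t ht => ?_)
  exact Real.rpow_nonneg (by simpa using le_of_lt (Real.log_neg ht.1 ht.2)) a

lemma aux_meas_log (a : ℝ) : Measurable fun t : ℝ => ENNReal.ofReal ((-Real.log t) ^ a) := by
  measurability

/-- even moments of the Lebesgue measure on the unit `ℓᵖ` ball. -/
theorem even_moments_lp_ball
    (n : ℕ) (hn : 1 ≤ n)
    (p : ℝ) (hp : 1 < p)
    (Bp : Set (Fin n → ℝ))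
    (hBp : Bp = {x | ∑ i, |x i| ^ p ≤ 1})
    (k : Fin n → ℕ) (hk : ∀ i, Even (k i)) :
    ∫ x in Bp, ∏ i, x i ^ k i =
      (2 / p) ^ n * (Real.Gamma (1 + ((n : ℝ) + (∑ i, k i : ℕ)) / p))⁻¹ *
        ∏ i, Real.Gamma ((1 + (k i : ℝ)) / p) := by
  have hp0 : (0:ℝ) < p := lt_trans zero_lt_one hp
  have hp1 : (1:ℝ) ≤ p := le_of_lt hp
  set K : ℕ := ∑ i, k i with hK
  set G : (Fin n → ℝ) → ℝ := fun x => ∏ i, |x i| ^ k i with hG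
  set S : (Fin n → ℝ) → ℝ := fun x => ∑ i, |x i| ^ p with hSdef
  have hGnn : ∀ x, 0 ≤ G x := fun x => Finset.prod_nonneg fun i _ => pow_nonneg (abs_nonneg _) _
  have hGmeas : Measurable G :=
    Finset.measurable_prod _ fun i _ => (measurable_pi_apply i).abs.pow_const (k i)
  have hSmeas : Measurable S := by
    apply Finset.measurable_sum
    intro i _
    fun_prop
  have hSnn : ∀ x, 0 ≤ S x := fun x =>
    Finset.sum_nonneg fun i _ => Real.rpow_nonneg (abs_nonneg _) _
  set μ : Measure (Fin n → ℝ) := volume.withDensity (fun x => ENNReal.ofReal (G x)) with hμ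
  set B : Set (Fin n → ℝ) := {x | S x ≤ 1} with hBdef
  have hBmeas : MeasurableSet B := measurableSet_le hSmeas measurable_const
  -- scaling
  have hscale : ∀ r : ℝ, 0 < r →
      μ {x | S x ≤ r ^ p} = ENNReal.ofReal (r ^ (n + K)) * μ B := by
    intro r hr
    have hrp : (0:ℝ) < r ^ p := Real.rpow_pos_of_pos hr p
    have hA : MeasurableSet {x | S x ≤ r ^ p} := measurableSet_le hSmeas measurable_const
    have hfm : Measurable fun x => ENNReal.ofReal (G x) := hGmeas.ennreal_ofReal
    have hmap : Measure.map (r • ·) (volume : Measure (Fin n → ℝ))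
        = ENNReal.ofReal (|(r ^ Module.finrank ℝ (Fin n → ℝ))⁻¹|) • volume :=
      Measure.map_addHaar_smul volume (ne_of_gt hr)
    have hfr : Module.finrank ℝ (Fin n → ℝ) = n := by
      simp [Module.finrank_pi]
    rw [hfr] at hmap
    have hvol : (volume : Measure (Fin n → ℝ))
        = ENNReal.ofReal (r ^ n) • Measure.map (r • ·) volume := by
      rw [hmap, smul_smul, abs_of_pos (by positivity), ← ENNReal.ofReal_mul (by positivity),
        mul_inv_cancel₀ (by positivity), ENNReal.ofReal_one, one_smul]
    have hpt : ∀ x, ({x | S x ≤ r ^ p}).indicator (fun x => ENNReal.ofReal (G x)) (r • x)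
        = ENNReal.ofReal (r ^ K) * B.indicator (fun x => ENNReal.ofReal (G x)) x := by
      intro x
      have hmem : (r • x ∈ {x | S x ≤ r ^ p}) ↔ x ∈ B := by
        simp only [mem_setOf_eq, hBdef]
        have hSr : S (r • x) = r ^ p * S x := by
          simp only [hSdef, Pi.smul_apply, smul_eq_mul, Finset.mul_sum]
          refine Finset.sum_congr rfl fun i _ => ?_
          rw [abs_mul, Real.mul_rpow (abs_nonneg _) (abs_nonneg _), abs_of_pos hr]
        rw [hSr]
        exact mul_le_iff_le_one_right hrp
      have hGr : G (r • x) = r ^ K * G x := by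
        simp only [hG, Pi.smul_apply, smul_eq_mul]
        calc ∏ i, |r * x i| ^ k i = ∏ i, (r ^ k i * |x i| ^ k i) := by
              refine Finset.prod_congr rfl fun i _ => ?_
              rw [abs_mul, mul_pow, abs_of_pos hr]
          _ = (∏ i, r ^ k i) * ∏ i, |x i| ^ k i := Finset.prod_mul_distrib
          _ = r ^ K * ∏ i, |x i| ^ k i := by rw [Finset.prod_pow_eq_pow_sum]
      by_cases hx : x ∈ B
      · rw [indicator_of_mem (hmem.mpr hx), indicator_of_mem hx, hGr,
          ENNReal.ofReal_mul (by positivity)]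
      · rw [indicator_of_notMem (fun h => hx (hmem.mp h)), indicator_of_notMem hx, mul_zero]
    calc μ {x | S x ≤ r ^ p}
        = ∫⁻ x, ({x | S x ≤ r ^ p}).indicator (fun x => ENNReal.ofReal (G x)) x := by
          rw [hμ, withDensity_apply _ hA, lintegral_indicator hA]
      _ = ENNReal.ofReal (r ^ n) *
          ∫⁻ x, ({x | S x ≤ r ^ p}).indicator (fun x => ENNReal.ofReal (G x)) (r • x) := by
          conv_lhs => rw [hvol]
          rw [lintegral_smul_measure, lintegral_map (hfm.indicator hA) (measurable_const_smul r), smul_eq_mul]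
      _ = ENNReal.ofReal (r ^ n) * (ENNReal.ofReal (r ^ K) *
          ∫⁻ x, B.indicator (fun x => ENNReal.ofReal (G x)) x) := by
          rw [← lintegral_const_mul _ (hfm.indicator hBmeas)]
          simp_rw [hpt]
      _ = ENNReal.ofReal (r ^ (n + K)) * μ B := by
          rw [hμ, withDensity_apply _ hBmeas, ← lintegral_indicator hBmeas, ← mul_assoc,
            ← ENNReal.ofReal_mul (by positivity), ← pow_add]
  set a : ℝ := ((n : ℝ) + K) / p with ha
  have ha0 : 0 < a := by positivity
  have hexp_meas : Measurable fun x => Real.exp (-S x) := hSmeas.neg.exp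
  -- layer cake
  have key : ∫⁻ x, ENNReal.ofReal (Real.exp (-S x)) ∂μ
      = ∫⁻ t in Ioi 0, μ {x | t ≤ Real.exp (-S x)} :=
    lintegral_eq_lintegral_meas_le μ (ae_of_all _ fun x => (Real.exp_pos _).le)
      hexp_meas.aemeasurable
  -- RHS of the layer cake
  have hAB : Ioo (0:ℝ) 1 ∪ Ici 1 = Ioi 0 := Ioo_union_Ici_eq_Ioi zero_lt_one
  have hRHS : ∫⁻ t in Ioi 0, μ {x | t ≤ Real.exp (-S x)}
      = μ B * ENNReal.ofReal (Real.Gamma (1 + a)) := by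
    rw [← hAB, lintegral_union measurableSet_Ici
      (by exact fun s hs1 hs2 t ht => absurd (hs2 ht) (not_le.mpr (hs1 ht).2))]
    have h2 : ∫⁻ t in Ici (1:ℝ), μ {x | t ≤ Real.exp (-S x)} = 0 := by
      have hz : ∀ t ∈ Ioi (1:ℝ), μ {x | t ≤ Real.exp (-S x)} = 0 := by
        intro t ht
        have hemp : {x | t ≤ Real.exp (-S x)} = ∅ := by
          ext x
          simp only [mem_setOf_eq, mem_empty_iff_false, iff_false, not_le]
          calc Real.exp (-S x) ≤ 1 := Real.exp_le_one_iff.mpr (neg_nonpos.mpr (hSnn x))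
            _ < t := ht
        rw [hemp, measure_empty]
      rw [← Measure.restrict_congr_set Ioi_ae_eq_Ici]
      calc ∫⁻ t in Ioi (1:ℝ), μ {x | t ≤ Real.exp (-S x)}
          = ∫⁻ _ in Ioi (1:ℝ), 0 := setLIntegral_congr_fun measurableSet_Ioi hz
        _ = 0 := by simp
    have hpt2 : ∀ t ∈ Ioo (0:ℝ) 1, μ {x | t ≤ Real.exp (-S x)}
        = μ B * ENNReal.ofReal ((-Real.log t) ^ a) := by
      intro t ht
      obtain ⟨ht0, ht1⟩ := ht
      have hc : 0 < -Real.log t := by simpa using Real.log_neg ht0 ht1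
      set c : ℝ := -Real.log t with hc'
      have hrp_eq : (c ^ (1/p)) ^ p = c := by
        rw [← Real.rpow_mul hc.le, one_div_mul_cancel (ne_of_gt hp0), Real.rpow_one]
      have hset : {x | t ≤ Real.exp (-S x)} = {x | S x ≤ (c ^ (1/p)) ^ p} := by
        ext x
        simp only [mem_setOf_eq, hrp_eq]
        rw [← Real.log_le_iff_le_exp ht0]
        exact le_neg
      rw [hset, hscale _ (Real.rpow_pos_of_pos hc _), mul_comm]
      congr 1
      rw [← Real.rpow_natCast (c ^ (1/p)) (n+K), ← Real.rpow_mul hc.le]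
      congr 1
      rw [ha]
      push_cast
      ring
    have h1 : ∫⁻ t in Ioo (0:ℝ) 1, μ {x | t ≤ Real.exp (-S x)}
        = μ B * ENNReal.ofReal (Real.Gamma (1 + a)) := by
      calc ∫⁻ t in Ioo (0:ℝ) 1, μ {x | t ≤ Real.exp (-S x)}
          = ∫⁻ t in Ioo (0:ℝ) 1, μ B * ENNReal.ofReal ((-Real.log t) ^ a) :=
            setLIntegral_congr_fun measurableSet_Ioo hpt2
        _ = μ B * ∫⁻ t in Ioo (0:ℝ) 1, ENNReal.ofReal ((-Real.log t) ^ a) :=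
            lintegral_const_mul _ (aux_meas_log a)
        _ = μ B * ENNReal.ofReal (Real.Gamma (1 + a)) := by rw [aux_log_integral ha0]
    rw [h1, h2, add_zero]
  -- full-space integral evaluation
  set P : ℝ := ∏ i, (2 / p * Real.Gamma ((1 + (k i : ℝ)) / p)) with hP
  have hPnn : 0 ≤ P :=
    Finset.prod_nonneg fun i _ => mul_nonneg (by positivity)
      (Real.Gamma_pos_of_pos (by positivity)).le
  have hIntProd : Integrable (fun x : Fin n → ℝ => ∏ i, (|x i| ^ k i * Real.exp (-|x i| ^ p))) :=
    Integrable.fintype_prod fun i => aux_int1d_integrable hp1 (k i)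
  have hprodval : ∫ x : Fin n → ℝ, ∏ i, (|x i| ^ k i * Real.exp (-|x i| ^ p)) = P := by
    rw [volume_pi, integral_fintype_prod_eq_prod (μ := fun _ => volume)
      (f := fun i (t : ℝ) => |t| ^ k i * Real.exp (-|t| ^ p))]
    exact Finset.prod_congr rfl fun i _ => aux_int1d hp1 (k i)
  have hfactor : ∀ x : Fin n → ℝ,
      G x * Real.exp (-S x) = ∏ i, (|x i| ^ k i * Real.exp (-|x i| ^ p)) := by
    intro x
    rw [Finset.prod_mul_distrib, hG, hSdef]
    congr 1
    rw [← Real.exp_sum]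
    congr 1
    simp
  have hLHS : ∫⁻ x, ENNReal.ofReal (Real.exp (-S x)) ∂μ = ENNReal.ofReal P := by
    rw [hμ, lintegral_withDensity_eq_lintegral_mul _ hGmeas.ennreal_ofReal
      hexp_meas.ennreal_ofReal]
    have e : ∀ x : Fin n → ℝ,
        ((fun x => ENNReal.ofReal (G x)) * fun x => ENNReal.ofReal (Real.exp (-S x))) x
          = ENNReal.ofReal (∏ i, (|x i| ^ k i * Real.exp (-|x i| ^ p))) := by
      intro x
      rw [Pi.mul_apply, ← ENNReal.ofReal_mul (hGnn x), hfactor]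
    rw [lintegral_congr e,
      ← ofReal_integral_eq_lintegral_ofReal hIntProd (ae_of_all _ fun x =>
        Finset.prod_nonneg fun i _ =>
          mul_nonneg (pow_nonneg (abs_nonneg _) _) (Real.exp_pos _).le), hprodval]
  set Γd : ℝ := Real.Gamma (1 + a) with hΓd
  have hΓdpos : 0 < Γd := Real.Gamma_pos_of_pos (by positivity)
  have hcomb : ENNReal.ofReal P = μ B * ENNReal.ofReal Γd := by
    rw [← hLHS, key, hRHS]
  have hμB : μ B = ENNReal.ofReal (P * Γd⁻¹) := by
    have h1 : ENNReal.ofReal Γd ≠ 0 := ne_of_gt (ENNReal.ofReal_pos.mpr hΓdpos)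
    have h2 : ENNReal.ofReal Γd ≠ ⊤ := ENNReal.ofReal_ne_top
    calc μ B = μ B * ENNReal.ofReal Γd * (ENNReal.ofReal Γd)⁻¹ := by
          rw [mul_assoc, ENNReal.mul_inv_cancel h1 h2, mul_one]
      _ = ENNReal.ofReal P * (ENNReal.ofReal Γd)⁻¹ := by rw [← hcomb]
      _ = ENNReal.ofReal (P * Γd⁻¹) := by
          rw [← ENNReal.ofReal_inv_of_pos hΓdpos, ← ENNReal.ofReal_mul hPnn]
  -- final
  rw [hBp]
  have hintegrand : ∀ x : Fin n → ℝ, (∏ i, x i ^ k i) = G x := fun x =>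
    Finset.prod_congr rfl fun i _ => ((hk i).pow_abs (x i)).symm
  have hBint : ∫ x in B, ∏ i, x i ^ k i = (μ B).toReal := by
    have e1 : ∫ x in B, ∏ i, x i ^ k i = ∫ x in B, G x :=
      integral_congr_ae (ae_of_all _ fun x => hintegrand x)
    rw [e1, integral_eq_lintegral_of_nonneg_ae (ae_of_all _ fun x => hGnn x)
      hGmeas.aestronglyMeasurable, hμ, withDensity_apply _ hBmeas]
  rw [hBint, hμB, ENNReal.toReal_ofReal (mul_nonneg hPnn (inv_nonneg.mpr hΓdpos.le)), hP]
  rw [Finset.prod_mul_distrib, Finset.prod_const, Finset.card_univ, Fintype.card_fin]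
  ring
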